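/- If G is a vertex-transitive (d,k;+1)-digraph with d ≥ 2, then (k+1) divides d·(M(d,k)+1) = 2d + d^2 + ... + d^{k+1}. -/

import Mathlib

/-- `IsWalk A w` means the nonempty list `w` of vertices is a directed walk
in the digraph with adjacency relation `A`. -/
def IsWalk {V : Type*} (A : V → V → Prop) : List V → Prop
  | [] => False
  | [_] => True
  | a :: b :: l => A a b ∧ IsWalk A (b :: l)

/-- `WalkFrom A u v w` means `w` is a directed walk from `u` to `v`.
A walk represented by a list of length `n+1` has length `n` as a walk. -/
def WalkFrom {V : Type*} (A : V → V → Prop) (u v : V) (w : List V) : Prop :=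
  IsWalk A w ∧ w.head? = some u ∧ w.getLast? = some v

/-- A digraph is `k`-geodetic if for any (not necessarily distinct) vertices
`u, v` there is at most one directed walk from `u` to `v` of length `≤ k`. -/
def KGeodetic {V : Type*} (A : V → V → Prop) (k : ℕ) : Prop :=
  ∀ u v : V, ∀ w₁ w₂ : List V, WalkFrom A u v w₁ → WalkFrom A u v w₂ →
    w₁.length ≤ k + 1 → w₂.length ≤ k + 1 → w₁ = w₂

/-- `ReachIn A k u v` means there is a directed walk from `u` to `v` of
length at most `k`. -/
def ReachIn {V : Type*} (A : V → V → Prop) (k : ℕ) (u v : V) : Prop :=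
  ∃ w : List V, WalkFrom A u v w ∧ w.length ≤ k + 1

/-- The directed Moore bound `M(d,k) = 1 + d + d^2 + ... + d^k`. -/
def mooreBound (d k : ℕ) : ℕ := ∑ i ∈ Finset.range (k + 1), d ^ i

/-- `o` is the outlier function of a `k`-geodetic digraph with excess one:
for each vertex `u`, `o u` is the unique vertex not reachable from `u` by a
walk of length at most `k`. -/
def IsOutlierFn {V : Type*} (A : V → V → Prop) (k : ℕ) (o : V → V) : Prop :=
  ∀ u v : V, ¬ ReachIn A k u v ↔ v = o u

section AuxWalk

variable {V : Type*} {A : V → V → Prop}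

lemma walkFrom_singleton (u : V) : WalkFrom A u u [u] :=
  ⟨trivial, rfl, rfl⟩

lemma walkFrom_cons {u v x : V} {w : List V} (h : A u v) (hw : WalkFrom A v x w) :
    WalkFrom A u x (u :: w) := by
  obtain ⟨hwalk, hhead, hlast⟩ := hw
  cases w with
  | nil => simp at hhead
  | cons b t =>
    have hb : b = v := by simpa using hhead
    subst hb
    exact ⟨⟨h, hwalk⟩, rfl, by simpa [List.getLast?_cons_cons] using hlast⟩

lemma isWalk_concat {v x : V} : ∀ {w : List V}, IsWalk A w → w.getLast? = some v → A v x →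
    IsWalk A (w ++ [x])
  | [], h, _, _ => h.elim
  | [a], _, hl, hx => by
      have ha : a = v := by simpa using hl
      subst ha; exact ⟨hx, trivial⟩
  | a :: b :: t, h, hl, hx => by
      refine ⟨h.1, isWalk_concat h.2 ?_ hx⟩
      simpa [List.getLast?_cons_cons] using hl

lemma walkFrom_concat {u v x : V} {w : List V} (h : WalkFrom A u v w) (hx : A v x) :
    WalkFrom A u x (w ++ [x]) := by
  obtain ⟨hwalk, hhead, hlast⟩ := h
  cases w with
  | nil => simp at hhead
  | cons a t =>
    exact ⟨isWalk_concat hwalk hlast hx, by simpa using hhead,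
      by rw [show a :: t ++ [x] = (a :: t) ++ [x] from rfl, List.getLast?_concat]⟩

lemma walkFrom_take {x v : V} : ∀ {m : ℕ} {w : List V} {u : V},
    WalkFrom A u v w → w[m]? = some x → WalkFrom A u x (w.take (m + 1)) := by
  intro m
  induction m with
  | zero =>
    intro w u h hm
    cases w with
    | nil => simp at hm
    | cons a t =>
      have ha : a = u := by simpa using h.2.1
      have hx : a = x := by simpa using hm
      subst ha; subst hx
      simpa using walkFrom_singleton (A := A) a
  | succ n ih =>
    intro w u h hm
    match w, h with
    | [], h => exact h.1.elim
    | [a], h => simp at hm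
    | a :: b :: t, h =>
      have ha : a = u := by simpa using h.2.1
      have hw : WalkFrom A b v (b :: t) :=
        ⟨h.1.2, rfl, by simpa [List.getLast?_cons_cons] using h.2.2⟩
      have hrec := ih hw (by simpa using hm)
      subst ha
      exact walkFrom_cons h.1.1 hrec

lemma isWalk_map (φ : V → V) (hφ : ∀ a b, A a b → A (φ a) (φ b)) :
    ∀ {w : List V}, IsWalk A w → IsWalk A (w.map φ)
  | [], h => h.elim
  | [a], _ => trivial
  | a :: b :: t, h => ⟨hφ _ _ h.1, isWalk_map φ hφ (w := b :: t) h.2⟩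

lemma reachIn_map (φ : V → V) (hφ : ∀ a b, A a b → A (φ a) (φ b)) {k : ℕ} {u v : V} :
    ReachIn A k u v → ReachIn A k (φ u) (φ v) := by
  rintro ⟨w, ⟨hw, hh, hl⟩, hlen⟩
  exact ⟨w.map φ, ⟨isWalk_map φ hφ hw, by rw [List.head?_map, hh]; rfl,
    by rw [List.getLast?_map, hl]; rfl⟩, by simpa using hlen⟩

end AuxWalk

/-- Key counting lemma: if every arc can be closed up (its reverse endpoint is
reachable within `k`), then the arcs partition into closed walks of length
`k+1`, so `k+1` divides the number of arcs. -/
lemma cycle_divides {V : Type*} [Fintype V] (A : V → V → Prop) (k : ℕ) (hk : 2 ≤ k)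
    (hgeo : KGeodetic A k) (hreach : ∀ u v : V, A u v → ReachIn A k v u) :
    (k + 1) ∣ Nat.card {p : V × V // A p.1 p.2} := by
  classical
  have hclosed : ∀ (u : V) (w : List V), WalkFrom A u u w → w.length ≤ k + 1 → w = [u] := by
    intro u w hw hlen
    exact hgeo u u w [u] hw (walkFrom_singleton u) hlen (by simp)
  have hWex : ∀ a : {p : V × V // A p.1 p.2}, ∃ w, WalkFrom A a.1.2 a.1.1 w ∧ w.length = k + 1 := by
    rintro ⟨⟨u, v⟩, ha⟩
    obtain ⟨w, hw, hlen⟩ := hreach u v ha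
    refine ⟨w, hw, ?_⟩
    by_contra hne
    have h1 : (u :: w) = [u] :=
      hclosed u (u :: w) (walkFrom_cons ha hw) (by simp; omega)
    have h2 : w = [] := by simpa using h1
    obtain ⟨-, hh, -⟩ := hw
    rw [h2] at hh; simp at hh
  set E := {p : V × V // A p.1 p.2} with hE
  choose W hW hWlen using hWex
  have hWuniq : ∀ (a : E) (w : List V), WalkFrom A a.1.2 a.1.1 w → w.length ≤ k + 1 → w = W a := by
    intro a w hw hl
    exact hgeo _ _ w (W a) hw (hW a) hl (by rw [hWlen a])
  have hdec : ∀ a : E, ∃ y t, W a = a.1.2 :: y :: t := by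
    intro a
    obtain ⟨hwalk, hhead, hlast⟩ := hW a
    have hlen := hWlen a
    match hWa : W a with
    | [] => rw [hWa] at hhead; simp at hhead
    | [b] => rw [hWa] at hlen; simp at hlen; omega
    | b :: c :: t =>
      rw [hWa] at hhead
      have hb : b = a.1.2 := by simpa using hhead
      exact ⟨c, t, by rw [← hb]⟩
  have hnext : ∀ a : E, A a.1.2 ((W a).getD 1 a.1.2) := by
    intro a
    obtain ⟨y, t, hWa⟩ := hdec a
    have hwalk := (hW a).1
    rw [hWa] at hwalk ⊢
    simpa using hwalk.1
  obtain ⟨f, hf1, hf2⟩ : ∃ f : E → E, (∀ a, (f a).1.1 = a.1.2) ∧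
      (∀ a, (f a).1.2 = (W a).getD 1 a.1.2) :=
    ⟨fun a => ⟨(a.1.2, (W a).getD 1 a.1.2), hnext a⟩, fun _ => rfl, fun _ => rfl⟩
  have hrot : ∀ a : E, W (f a) = (W a).tail ++ [a.1.2] := by
    intro a
    obtain ⟨y, t, hWa⟩ := hdec a
    have h1 : WalkFrom A y a.1.1 (y :: t) := by
      obtain ⟨hwalk, hhead, hlast⟩ := hW a
      rw [hWa] at hwalk hlast
      exact ⟨hwalk.2, rfl, by simpa [List.getLast?_cons_cons] using hlast⟩
    have h2 : WalkFrom A y a.1.2 ((y :: t) ++ [a.1.2]) := walkFrom_concat h1 a.2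
    have e2 : (f a).1.2 = y := by rw [hf2 a, hWa]; simp
    have h2' : WalkFrom A (f a).1.2 (f a).1.1 ((y :: t) ++ [a.1.2]) := by
      rw [hf1 a, e2]; exact h2
    have h3 : ((y :: t) ++ [a.1.2]).length ≤ k + 1 := by
      have hlen := hWlen a; rw [hWa] at hlen; simp at hlen ⊢; omega
    have h4 := hWuniq (f a) _ h2' h3
    rw [← h4, hWa]
    rfl
  have hiter : ∀ m, m ≤ k → ∀ a : E,
      (a.1.1 :: W a)[m]? = some ((f^[m] a).1.1) ∧
      (a.1.1 :: W a)[m + 1]? = some ((f^[m] a).1.2) := by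
    intro m
    induction m with
    | zero =>
      intro _ a
      obtain ⟨y, t, hWa⟩ := hdec a
      simp [hWa]
    | succ n ih =>
      intro hn a
      have hLfa : (f a).1.1 :: W (f a) = W a ++ [a.1.2] := by
        obtain ⟨y, t, hWa⟩ := hdec a
        rw [hf1 a, hrot a, hWa]
        simp
      have hn' : n ≤ k := le_trans (Nat.le_succ n) hn
      obtain ⟨ih1, ih2⟩ := ih hn' (f a)
      rw [hLfa] at ih1 ih2
      rw [List.getElem?_append, if_pos (by rw [hWlen a]; omega)] at ih1
      rw [List.getElem?_append, if_pos (by rw [hWlen a]; omega)] at ih2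
      constructor
      · rw [List.getElem?_cons_succ, Function.iterate_succ_apply]
        exact ih1
      · rw [List.getElem?_cons_succ, Function.iterate_succ_apply]
        exact ih2
  have hWlast : ∀ a : E, (W a)[k]? = some a.1.1 := by
    intro a
    have hlast := (hW a).2.2
    rw [List.getLast?_eq_getElem?, hWlen a] at hlast
    simpa using hlast
  have hper : ∀ a : E, f^[k + 1] a = a := by
    intro a
    have hb := hiter k le_rfl a
    have hb2 : (f^[k] a).1.2 = a.1.1 := by
      have h := hb.2
      rw [List.getElem?_cons_succ, hWlast a] at h
      exact (Option.some.inj h).symm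
    have hcw : WalkFrom A a.1.1 a.1.1 (a.1.1 :: W a) := walkFrom_cons a.2 (hW a)
    have htk : WalkFrom A a.1.1 (f^[k] a).1.1 ((a.1.1 :: W a).take (k + 1)) :=
      walkFrom_take hcw hb.1
    have hWb : (a.1.1 :: W a).take (k + 1) = W (f^[k] a) := by
      apply hWuniq (f^[k] a) _ (by rw [hb2]; exact htk)
      simp [hWlen a]
    have e2 : (f (f^[k] a)).1.2 = a.1.2 := by
      obtain ⟨y, t, hWa⟩ := hdec a
      rw [hf2 (f^[k] a), ← hWb, List.getD_eq_getElem?_getD, List.getElem?_take,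
        if_pos (by omega), List.getElem?_cons_succ, hWa]
      simp
    have hfb : f (f^[k] a) = a := by
      apply Subtype.ext
      exact Prod.ext ((hf1 (f^[k] a)).trans hb2) e2
    rw [Function.iterate_succ_apply', hfb]
  have hfree : ∀ (a : E) (m : ℕ), 1 ≤ m → m ≤ k → f^[m] a ≠ a := by
    intro a m h1 h2 heq
    have hm := (hiter m h2 a).1
    rw [heq] at hm
    have hcw : WalkFrom A a.1.1 a.1.1 (a.1.1 :: W a) := walkFrom_cons a.2 (hW a)
    have htk := walkFrom_take hcw hm
    have heq1 := hclosed a.1.1 _ htk (by simp [hWlen a]; omega)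
    have hlen : ((a.1.1 :: W a).take (m + 1)).length = m + 1 := by simp [hWlen a]; omega
    rw [heq1] at hlen; simp at hlen; omega
  -- periodicity consequences
  have hpow : ∀ (q : ℕ) (a : E), f^[(k + 1) * q] a = a := by
    intro q
    induction q with
    | zero => intro a; simp
    | succ n ih =>
      intro a
      rw [Nat.mul_succ, Function.iterate_add_apply, hper, ih]
  have hmod : ∀ (m : ℕ) (a : E), f^[m] a = f^[m % (k + 1)] a := by
    intro m a
    conv_lhs => rw [← Nat.div_add_mod m (k + 1)]
    rw [Function.iterate_add_apply, hpow]
  have hinj' : ∀ (a : E) (i j : ℕ), i < j → j ≤ k → f^[i] a ≠ f^[j] a := by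
    intro a i j hij hj heq
    have h : f^[(k + 1 - j) + j] a = f^[(k + 1 - j) + i] a := by
      rw [Function.iterate_add_apply, Function.iterate_add_apply, heq]
    rw [show k + 1 - j + j = k + 1 by omega, hper] at h
    exact hfree a (k + 1 - j + i) (by omega) (by omega) h.symm
  -- orbits
  set orb : E → Finset E :=
    fun a => Finset.image (fun m : Fin (k + 1) => f^[(m : ℕ)] a) Finset.univ with horb
  have hmemiter : ∀ (a : E) (m : ℕ), f^[m] a ∈ orb a := by
    intro a m
    rw [horb]
    exact Finset.mem_image.mpr ⟨⟨m % (k + 1), Nat.mod_lt _ (by omega)⟩, Finset.mem_univ _,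
      (hmod m a).symm⟩
  have hmem : ∀ a : E, a ∈ orb a := fun a => by simpa using hmemiter a 0
  have hcard_orb : ∀ a : E, (orb a).card = k + 1 := by
    intro a
    have hinjf : Function.Injective (fun m : Fin (k + 1) => f^[(m : ℕ)] a) := by
      intro i j h
      rcases lt_trichotomy (i : ℕ) (j : ℕ) with hlt | heq | hgt
      · exact absurd h (hinj' a _ _ hlt (by have := j.isLt; omega))
      · exact Fin.ext heq
      · exact absurd h.symm (hinj' a _ _ hgt (by have := i.isLt; omega))
    rw [horb, Finset.card_image_of_injective _ hinjf, Finset.card_univ, Fintype.card_fin]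
  have horb_eq : ∀ a b : E, b ∈ orb a → orb b = orb a := by
    intro a b hb
    rw [horb] at hb
    obtain ⟨i, -, hi⟩ := Finset.mem_image.mp hb
    apply Finset.Subset.antisymm
    · intro c hc
      rw [horb] at hc
      obtain ⟨m, -, hm⟩ := Finset.mem_image.mp hc
      have : c = f^[(m : ℕ) + (i : ℕ)] a := by
        rw [Function.iterate_add_apply, hi, hm]
      rw [this]; exact hmemiter a _
    · intro c hc
      rw [horb] at hc
      obtain ⟨m, -, hm⟩ := Finset.mem_image.mp hc
      have ha : f^[k + 1 - (i : ℕ)] b = a := by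
        rw [← hi, ← Function.iterate_add_apply,
          show k + 1 - (i : ℕ) + (i : ℕ) = k + 1 by have := i.isLt; omega, hper]
      have : c = f^[(m : ℕ) + (k + 1 - (i : ℕ))] b := by
        rw [Function.iterate_add_apply, ha, hm]
      rw [this]; exact hmemiter b _
  have hfiber : ∀ a : E, Finset.univ.filter (fun b => orb b = orb a) = orb a := by
    intro a
    ext b
    simp only [Finset.mem_filter, Finset.mem_univ, true_and]
    constructor
    · intro h; rw [← h]; exact hmem b
    · intro h; exact horb_eq a b h
  have hcount : Fintype.card E = (Finset.univ.image orb).card * (k + 1) := by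
    rw [← Finset.card_univ]
    rw [Finset.card_eq_sum_card_fiberwise
      (f := orb) (t := Finset.univ.image orb)
      (fun x _ => Finset.mem_image_of_mem orb (Finset.mem_univ x))]
    have hsum : ∑ t ∈ Finset.univ.image orb,
        (Finset.univ.filter (fun b => orb b = t)).card
        = ∑ _t ∈ Finset.univ.image orb, (k + 1) := by
      refine Finset.sum_congr rfl (fun t ht => ?_)
      obtain ⟨a, -, rfl⟩ := Finset.mem_image.mp ht
      rw [hfiber a]
      exact hcard_orb a
    rw [hsum, Finset.sum_const, smul_eq_mul]
  rw [Nat.card_eq_fintype_card, hcount]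
  exact Dvd.intro_left _ rfl

/-- If `G` is a vertex-transitive `(d,k;+1)`-digraph with `d ≥ 2`, then `k+1`
divides `d·(M(d,k)+1)`. -/
theorem stmt_10 {V : Type*} [Fintype V] (A : V → V → Prop) (d k : ℕ)
    (hd : 2 ≤ d) (hk : 2 ≤ k)
    (hgeo : KGeodetic A k)
    (hdeg : ∀ u : V, Set.ncard {w : V | A u w} = d)
    (hcard : Fintype.card V = mooreBound d k + 1)
    (o : V ≃ V) (ho : IsOutlierFn A k o)
    (hhom : ∀ a b : V, A a b ↔ A (o a) (o b))
    (hvt : ∀ u v : V, ∃ φ : V ≃ V, (∀ a b : V, A a b ↔ A (φ a) (φ b)) ∧ φ u = v) :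
    (k + 1) ∣ d * (mooreBound d k + 1) := by
  classical
  -- automorphisms commute with the outlier function
  have hφo : ∀ (φ : V ≃ V), (∀ a b : V, A a b ↔ A (φ a) (φ b)) → ∀ u : V, φ (o u) = o (φ u) := by
    intro φ hφ u
    have h1 : ¬ ReachIn A k u (o u) := (ho u (o u)).mpr rfl
    have h2 : ¬ ReachIn A k (φ u) (φ (o u)) := by
      intro h
      apply h1
      have := reachIn_map (A := A) φ.symm
        (fun a b hab => (hφ (φ.symm a) (φ.symm b)).mpr (by simpa using hab)) h
      simpa using this
    exact (ho (φ u) (φ (o u))).mp h2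
  -- if some vertex is Type II, all are
  have htypeII : (∃ u : V, A (o u) u) → ∀ v : V, A (o v) v := by
    rintro ⟨u, hu⟩ v
    obtain ⟨φ, hφ, hφu⟩ := hvt u v
    have h := (hφ (o u) u).mp hu
    rwa [hφo φ hφ u, hφu] at h
  -- no vertex is Type II
  have hnoII : ∀ u : V, ¬ A (o u) u := by
    intro u hu
    have hall := htypeII ⟨u, hu⟩
    have h2 : ∃ w₁ w₂ : V, w₁ ∈ {w : V | A u w} ∧ w₂ ∈ {w : V | A u w} ∧ w₁ ≠ w₂ := by
      rw [← Set.one_lt_ncard_iff (Set.toFinite _), hdeg u]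
      omega
    have key : ∀ w : V, A u w → u = o w := by
      intro w hw
      by_contra hne
      have walk1 : WalkFrom A (o u) w [o u, u, w] :=
        ⟨⟨hall u, hw, trivial⟩, rfl, by simp⟩
      have walk2 : WalkFrom A (o u) w [o u, o w, w] :=
        ⟨⟨(hhom u w).mp hw, hall w, trivial⟩, rfl, by simp⟩
      have heq := hgeo (o u) w _ _ walk1 walk2 (by simp; omega) (by simp; omega)
      simp at heq
      exact hne heq
    obtain ⟨w₁, w₂, h1, h2, hne⟩ := h2
    exact hne (o.injective ((key w₁ h1).symm.trans (key w₂ h2)))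
  -- every arc can be closed up
  have hreach : ∀ u v : V, A u v → ReachIn A k v u := by
    intro u v huv
    by_contra h
    have heq : u = o v := (ho v u).mp h
    rw [heq] at huv
    exact hnoII v huv
  have hdvd := cycle_divides A k hk hgeo hreach
  -- count the arcs
  have hcardE : Nat.card {p : V × V // A p.1 p.2} = d * (mooreBound d k + 1) := by
    rw [Nat.card_eq_fintype_card,
      Fintype.card_congr (Equiv.subtypeProdEquivSigmaSubtype (fun a b : V => A a b)),
      Fintype.card_sigma]
    have hc : ∀ u : V, Fintype.card {v : V // A u v} = d := by
      intro u
      rw [← Nat.card_eq_fintype_card]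
      rw [show Nat.card {v : V // A u v} = Set.ncard {w : V | A u w} from
        Nat.card_coe_set_eq {w : V | A u w}]
      exact hdeg u
    rw [Finset.sum_congr rfl (fun u _ => hc u), Finset.sum_const, smul_eq_mul,
      Finset.card_univ, hcard, Nat.mul_comm]
  rwa [hcardE] at hdvd
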